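/- A real number c satisfies ∫_P x₁ e^{-c(x₁+x₂)} dx₁ dx₂ = 0 and ∫_P x₂ e^{-c(x₁+x₂)} dx₁ dx₂ = 0 if and only if c is the (unique) global minimizer of F. -/

import Mathlib

open MeasureTheory Real Set

/-- The closed pentagon with vertices (-1,-1), (1,-1), (1,0), (0,1), (-1,1). -/
def P : Set (ℝ × ℝ) :=
  {p : ℝ × ℝ | -1 ≤ p.1 ∧ p.1 ≤ 1 ∧ -1 ≤ p.2 ∧ p.2 ≤ 1 ∧ p.1 + p.2 ≤ 1}

lemma isClosed_P : IsClosed P := by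
  have : P = {p : ℝ × ℝ | -1 ≤ p.1} ∩ {p | p.1 ≤ 1} ∩ {p | -1 ≤ p.2} ∩ {p | p.2 ≤ 1}
      ∩ {p | p.1 + p.2 ≤ 1} := by ext p; simp [P]; tauto
  rw [this]
  exact ((((isClosed_le continuous_const continuous_fst).inter
    (isClosed_le continuous_fst continuous_const)).inter
    (isClosed_le continuous_const continuous_snd)).inter
    (isClosed_le continuous_snd continuous_const)).inter
    (isClosed_le (continuous_fst.add continuous_snd) continuous_const)

lemma measurableSet_P : MeasurableSet P := isClosed_P.measurableSet

lemma P_subset : P ⊆ Icc ((-1:ℝ),(-1:ℝ)) (1,1) := by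
  rintro ⟨x,y⟩ ⟨h1,h2,h3,h4,h5⟩
  exact ⟨⟨h1,h3⟩,⟨h2,h4⟩⟩

lemma isCompact_P : IsCompact P := (isCompact_Icc).of_isClosed_subset isClosed_P P_subset

lemma integrableOn_P {f : ℝ × ℝ → ℝ} (hf : Continuous f) : IntegrableOn f P :=
  hf.continuousOn.integrableOn_compact isCompact_P

lemma volume_P_lt_top : volume P < ⊤ :=
  lt_of_le_of_lt (measure_mono P_subset) (by exact (isCompact_Icc).measure_lt_top)

lemma volume_P_toReal_le : (volume P).toReal ≤ 4 := by
  have h1 : volume (Icc ((-1:ℝ),(-1:ℝ)) (1,1)) = 4 := by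
    rw [← Icc_prod_Icc, Measure.volume_eq_prod, Measure.prod_prod, Real.volume_Icc]
    norm_num
  have h2 := ENNReal.toReal_mono (ne_of_eq_of_ne h1 (by norm_num)) (measure_mono P_subset)
  rw [h1] at h2
  simpa using h2

/-- `F c = ∫_P e^{-c(x₁+x₂)} dx₁ dx₂` (Lebesgue measure on ℝ²). -/
noncomputable def F (c : ℝ) : ℝ := ∫ p in P, Real.exp (-c * (p.1 + p.2))

noncomputable def G (c : ℝ) : ℝ := ∫ p in P, (p.1 + p.2) * Real.exp (-c * (p.1 + p.2))

lemma abs_s_le {p : ℝ × ℝ} (hp : p ∈ P) : |p.1 + p.2| ≤ 2 := by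
  obtain ⟨h1,h2,h3,h4,h5⟩ := hp
  rw [abs_le]; constructor <;> linarith

/-- Symmetry: swap preserves P and the moments are equal. -/
lemma swap_preimage : Prod.swap ⁻¹' P = P := by
  ext p
  simp only [mem_preimage, P, mem_setOf_eq, Prod.fst_swap, Prod.snd_swap]
  constructor <;> rintro ⟨h1,h2,h3,h4,h5⟩ <;> refine ⟨h3,h4,h1,h2, by linarith⟩

lemma moment_symm (c : ℝ) :
    (∫ p in P, p.1 * Real.exp (-c * (p.1 + p.2))) =
    (∫ p in P, p.2 * Real.exp (-c * (p.1 + p.2))) := by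
  have hmp : MeasurePreserving (Prod.swap : ℝ × ℝ → ℝ × ℝ) volume volume := by
    rw [Measure.volume_eq_prod]; exact Measure.measurePreserving_swap
  have hemb : MeasurableEmbedding (Prod.swap : ℝ × ℝ → ℝ × ℝ) :=
    MeasurableEquiv.prodComm.measurableEmbedding
  have := hmp.setIntegral_preimage_emb hemb
    (fun p : ℝ × ℝ => p.1 * Real.exp (-c * (p.1 + p.2))) P
  rw [swap_preimage] at this
  rw [← this]
  apply setIntegral_congr_fun measurableSet_P
  intro p _
  simp only [Prod.fst_swap, Prod.snd_swap]
  ring_nf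

lemma moment_sum (c : ℝ) :
    (∫ p in P, p.1 * Real.exp (-c * (p.1 + p.2))) +
    (∫ p in P, p.2 * Real.exp (-c * (p.1 + p.2))) = G c := by
  rw [← integral_add]
  · apply setIntegral_congr_fun measurableSet_P
    intro p _; ring
  · exact integrableOn_P (by fun_prop)
  · exact integrableOn_P (by fun_prop)

lemma moments_iff (c : ℝ) :
    ((∫ p in P, p.1 * Real.exp (-c * (p.1 + p.2))) = 0 ∧
     (∫ p in P, p.2 * Real.exp (-c * (p.1 + p.2))) = 0) ↔ G c = 0 := by
  constructor
  · rintro ⟨h1,h2⟩; rw [← moment_sum, h1, h2]; ring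
  · intro h
    have hs := moment_symm c
    have hsum := moment_sum c
    rw [h, hs] at hsum
    constructor
    · rw [hs]; linarith
    · linarith

lemma exp_lower (a b : ℝ) : Real.exp b + (a - b) * Real.exp b ≤ Real.exp a := by
  have h3 : Real.exp (a-b) * Real.exp b = Real.exp a := by rw [← Real.exp_add]; ring_nf
  nlinarith [Real.add_one_le_exp (a-b), Real.exp_pos b]

lemma exp_lower_strict {a b : ℝ} (h : a ≠ b) :
    Real.exp b + (a - b) * Real.exp b < Real.exp a := by
  have h3 : Real.exp (a-b) * Real.exp b = Real.exp a := by rw [← Real.exp_add]; ring_nf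
  have h4 : a - b ≠ 0 := sub_ne_zero.2 h
  nlinarith [Real.add_one_lt_exp h4, Real.exp_pos b]

def Q : Set (ℝ × ℝ) := Ioo (1/4 : ℝ) (1/2) ×ˢ Ioo (1/4 : ℝ) (1/2)

lemma Q_subset_P : Q ⊆ P := by
  rintro ⟨x,y⟩ ⟨⟨hx1,hx2⟩,⟨hy1,hy2⟩⟩
  exact ⟨by linarith, by linarith, by linarith, by linarith, by linarith⟩

lemma Q_s_pos {p : ℝ × ℝ} (hp : p ∈ Q) : 0 < p.1 + p.2 := by
  obtain ⟨⟨hx1,_⟩,⟨hy1,_⟩⟩ := hp; linarith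

lemma volume_Q : volume Q = ENNReal.ofReal (1/16) := by
  rw [Q, Measure.volume_eq_prod, Measure.prod_prod, Real.volume_Ioo]
  rw [← ENNReal.ofReal_mul (by norm_num)]
  norm_num

/-- Key convexity estimate. -/
lemma F_ge (c c' : ℝ) (hG : G c = 0) : F c ≤ F c' := by
  have hpt : ∀ p ∈ P, (0:ℝ) ≤ Real.exp (-c' * (p.1+p.2)) -
      (Real.exp (-c * (p.1+p.2)) + (c - c') * ((p.1+p.2) * Real.exp (-c * (p.1+p.2)))) := by
    intro p _
    have := exp_lower (-c' * (p.1+p.2)) (-c * (p.1+p.2))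
    nlinarith [this]
  have h1 : IntegrableOn (fun p : ℝ×ℝ => Real.exp (-c' * (p.1+p.2))) P :=
    integrableOn_P (by fun_prop)
  have h2 : IntegrableOn (fun p : ℝ×ℝ => Real.exp (-c * (p.1+p.2)) +
      (c - c') * ((p.1+p.2) * Real.exp (-c * (p.1+p.2)))) P :=
    integrableOn_P (by fun_prop)
  have hnn : 0 ≤ ∫ p in P, (Real.exp (-c' * (p.1+p.2)) -
      (Real.exp (-c * (p.1+p.2)) + (c - c') * ((p.1+p.2) * Real.exp (-c * (p.1+p.2))))) :=
    setIntegral_nonneg measurableSet_P hpt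
  rw [integral_sub h1 h2, integral_add (integrableOn_P (by fun_prop))
    (by exact (integrableOn_P (by fun_prop))), integral_const_mul] at hnn
  have hFG : F c' - (F c + (c - c') * G c) ≥ 0 := by
    unfold F G; linarith [hnn]
  rw [hG] at hFG; linarith

lemma F_gt (c c' : ℝ) (hG : G c = 0) (hne : c' ≠ c) : F c < F c' := by
  set h : ℝ × ℝ → ℝ := fun p => Real.exp (-c' * (p.1+p.2)) -
      (Real.exp (-c * (p.1+p.2)) + (c - c') * ((p.1+p.2) * Real.exp (-c * (p.1+p.2)))) with hh
  have hpt : ∀ p ∈ P, (0:ℝ) ≤ h p := by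
    intro p _
    have := exp_lower (-c' * (p.1+p.2)) (-c * (p.1+p.2))
    simp only [hh]; nlinarith [this]
  have hQpt : ∀ p ∈ Q, 0 < h p := by
    intro p hp
    have hs := Q_s_pos hp
    have hab : -c' * (p.1+p.2) ≠ -c * (p.1+p.2) := by
      intro habs
      apply hne
      have : (c - c') * (p.1 + p.2) = 0 := by linarith [habs]
      rcases mul_eq_zero.1 this with h' | h'
      · linarith
      · linarith
    have := exp_lower_strict hab
    simp only [hh]; nlinarith [this]
  have hint : IntegrableOn h P := integrableOn_P (by fun_prop)
  have hpos : 0 < ∫ p in P, h p := by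
    rw [setIntegral_pos_iff_support_of_nonneg_ae _ hint]
    · refine lt_of_lt_of_le ?_ (measure_mono (?_ : Q ⊆ Function.support h ∩ P))
      · rw [volume_Q]; norm_num
      · intro p hp
        exact ⟨ne_of_gt (hQpt p hp), Q_subset_P hp⟩
    · exact (ae_restrict_iff' measurableSet_P).2 (ae_of_all _ hpt)
  have h1 : IntegrableOn (fun p : ℝ×ℝ => Real.exp (-c' * (p.1+p.2))) P :=
    integrableOn_P (by fun_prop)
  have h2 : IntegrableOn (fun p : ℝ×ℝ => Real.exp (-c * (p.1+p.2)) +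
      (c - c') * ((p.1+p.2) * Real.exp (-c * (p.1+p.2)))) P :=
    integrableOn_P (by fun_prop)
  have heq : ∫ p in P, h p = F c' - (F c + (c - c') * G c) := by
    simp only [hh]
    rw [integral_sub h1 h2, integral_add (integrableOn_P (by fun_prop))
      (by exact (integrableOn_P (by fun_prop))), integral_const_mul]
    unfold F G; ring
  rw [heq, hG] at hpos; linarith

lemma continuous_G : Continuous G := by
  rw [continuous_iff_continuousAt]
  intro c₀
  have key : ContinuousAt (fun c : ℝ => ∫ p, (p.1 + p.2) * Real.exp (-c * (p.1 + p.2))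
      ∂(volume.restrict P)) c₀ := by
    apply continuousAt_of_dominated (bound := fun _ => 2 * Real.exp (2 * (|c₀| + 1)))
    · exact Filter.Eventually.of_forall fun c =>
        (Continuous.aestronglyMeasurable (by fun_prop))
    · filter_upwards [Metric.ball_mem_nhds c₀ one_pos] with c hc
      rw [ae_restrict_iff' measurableSet_P]
      apply ae_of_all
      intro p hp
      have hs := abs_s_le hp
      have hcb : |c| ≤ |c₀| + 1 := by
        have := abs_sub_abs_le_abs_sub c c₀
        have : |c - c₀| < 1 := by simpa [Real.dist_eq] using hc
        have := abs_sub_abs_le_abs_sub c c₀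
        linarith
      have hexp : Real.exp (-c * (p.1 + p.2)) ≤ Real.exp (2 * (|c₀| + 1)) := by
        apply Real.exp_le_exp.2
        calc -c * (p.1 + p.2) ≤ |(-c) * (p.1 + p.2)| := le_abs_self _
          _ = |c| * |p.1 + p.2| := by rw [abs_mul, abs_neg]
          _ ≤ (|c₀| + 1) * 2 := by
              apply mul_le_mul hcb hs (abs_nonneg _) (by positivity)
          _ = 2 * (|c₀| + 1) := by ring
      have : ‖(p.1 + p.2) * Real.exp (-c * (p.1 + p.2))‖
          = |p.1 + p.2| * Real.exp (-c * (p.1 + p.2)) := by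
        rw [norm_mul, Real.norm_eq_abs, Real.norm_eq_abs, Real.abs_exp]
      rw [this]
      apply mul_le_mul hs hexp (Real.exp_pos _).le (by norm_num)
    · exact integrableOn_const volume_P_lt_top.ne
    · exact ae_of_all _ fun p => (Continuous.continuousAt (by fun_prop))
  exact key

lemma exp24_ge : (15625 : ℝ) ≤ Real.exp 24 := by
  have h4 : (5:ℝ) ≤ Real.exp 4 := by
    have := Real.add_one_le_exp (4:ℝ); linarith
  have : Real.exp 24 = Real.exp 4 ^ 6 := by
    rw [← Real.exp_nat_mul]; norm_num
  rw [this]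
  calc (15625:ℝ) = 5 ^ 6 := by norm_num
    _ ≤ Real.exp 4 ^ 6 := by
        apply pow_le_pow_left₀ (by norm_num) h4

lemma G_neg48_pos : 0 < G (-48) := by
  have hGe : G (-48) = ∫ p in P, (p.1 + p.2) * Real.exp (48 * (p.1 + p.2)) := by
    unfold G; norm_num
  set f : ℝ × ℝ → ℝ := fun p => (p.1 + p.2) * Real.exp (48 * (p.1 + p.2)) with hf
  have hfint : IntegrableOn f P := integrableOn_P (by fun_prop)
  have hA : MeasurableSet {p : ℝ × ℝ | (1:ℝ)/2 ≤ p.1 + p.2} :=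
    measurableSet_le measurable_const (by fun_prop)
  set A := {p : ℝ × ℝ | (1:ℝ)/2 ≤ p.1 + p.2} with hAdef
  have hPA : MeasurableSet (P ∩ A) := measurableSet_P.inter hA
  have hfinPA : volume (P ∩ A) ≠ ⊤ :=
    (lt_of_le_of_lt (measure_mono inter_subset_left) volume_P_lt_top).ne
  have hfinPD : volume (P \ A) ≠ ⊤ :=
    (lt_of_le_of_lt (measure_mono diff_subset) volume_P_lt_top).ne
  have hsplit : (∫ p in P ∩ A, f p) + (∫ p in P \ A, f p) = ∫ p in P, f p :=
    integral_inter_add_diff hA hfint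
  -- volume of P ∩ A at least 1/16
  have hQA : Q ⊆ P ∩ A := by
    rintro ⟨x, y⟩ hp
    refine ⟨Q_subset_P hp, ?_⟩
    obtain ⟨⟨hx1, _⟩, ⟨hy1, _⟩⟩ := hp
    show (1:ℝ)/2 ≤ x + y
    linarith
  have hvol1 : (1:ℝ)/16 ≤ (volume (P ∩ A)).toReal := by
    have := ENNReal.toReal_mono hfinPA (measure_mono hQA)
    rw [volume_Q] at this
    simpa using this
  have hvol2 : (volume (P \ A)).toReal ≤ 4 := by
    have := ENNReal.toReal_mono volume_P_lt_top.ne (measure_mono (diff_subset (s := P) (t := A)))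
    linarith [volume_P_toReal_le]
  -- lower bound on P ∩ A
  have h1 : (volume (P ∩ A)).toReal • ((1:ℝ)/2 * Real.exp 24) ≤ ∫ p in P ∩ A, f p := by
    rw [← measureReal_def, ← setIntegral_const]
    apply setIntegral_mono_on (integrableOn_const hfinPA)
      (hfint.mono_set inter_subset_left) hPA
    intro p hp
    have hs : (1:ℝ)/2 ≤ p.1 + p.2 := hp.2
    have he : Real.exp 24 ≤ Real.exp (48 * (p.1 + p.2)) := by
      apply Real.exp_le_exp.2; linarith
    show (1:ℝ)/2 * Real.exp 24 ≤ (p.1 + p.2) * Real.exp (48 * (p.1 + p.2))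
    calc (1:ℝ)/2 * Real.exp 24 ≤ (1:ℝ)/2 * Real.exp (48 * (p.1 + p.2)) :=
          mul_le_mul_of_nonneg_left he (by norm_num)
      _ ≤ (p.1 + p.2) * Real.exp (48 * (p.1 + p.2)) :=
          mul_le_mul_of_nonneg_right hs (Real.exp_pos _).le
  have h1' : (15625:ℝ)/32 ≤ ∫ p in P ∩ A, f p := by
    have hc : (0:ℝ) ≤ (1:ℝ)/2 * Real.exp 24 := by positivity
    have : (1:ℝ)/16 * ((1:ℝ)/2 * Real.exp 24) ≤
        (volume (P ∩ A)).toReal * ((1:ℝ)/2 * Real.exp 24) :=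
      mul_le_mul_of_nonneg_right hvol1 hc
    have h24 := exp24_ge
    rw [smul_eq_mul] at h1
    nlinarith
  -- lower bound on P \ A
  have h2 : (-8:ℝ) ≤ ∫ p in P \ A, f p := by
    have h2' : (volume (P \ A)).toReal • (-2:ℝ) ≤ ∫ p in P \ A, f p := by
      rw [← measureReal_def, ← setIntegral_const]
      apply setIntegral_mono_on (integrableOn_const hfinPD)
        (hfint.mono_set diff_subset) (measurableSet_P.diff hA)
      intro p hp
      have hsl : -2 ≤ p.1 + p.2 := by
        obtain ⟨h1, _, h3, _, _⟩ := hp.1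
        linarith
      rcases le_or_gt (p.1 + p.2) 0 with hs | hs
      · have he : Real.exp (48 * (p.1 + p.2)) ≤ 1 := by
          rw [Real.exp_le_one_iff]; linarith
        have hep := Real.exp_pos (48 * (p.1 + p.2))
        show (-2:ℝ) ≤ (p.1 + p.2) * Real.exp (48 * (p.1 + p.2))
        nlinarith
      · have := Real.exp_pos (48 * (p.1 + p.2))
        show (-2:ℝ) ≤ (p.1 + p.2) * Real.exp (48 * (p.1 + p.2))
        nlinarith
    rw [smul_eq_mul] at h2'
    nlinarith [ENNReal.toReal_nonneg (a := volume (P \ A))]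
  rw [hGe, ← hsplit]
  linarith

lemma G_48_neg : G 48 < 0 := by
  have hGe : G 48 = ∫ p in P, (p.1 + p.2) * Real.exp (-48 * (p.1 + p.2)) := rfl
  set f : ℝ × ℝ → ℝ := fun p => (p.1 + p.2) * Real.exp (-48 * (p.1 + p.2)) with hf
  have hfint : IntegrableOn f P := integrableOn_P (by fun_prop)
  have hA : MeasurableSet {p : ℝ × ℝ | p.1 + p.2 ≤ -(1:ℝ)/2} :=
    measurableSet_le (by fun_prop) measurable_const
  set A := {p : ℝ × ℝ | p.1 + p.2 ≤ -(1:ℝ)/2} with hAdef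
  have hPA : MeasurableSet (P ∩ A) := measurableSet_P.inter hA
  have hfinPA : volume (P ∩ A) ≠ ⊤ :=
    (lt_of_le_of_lt (measure_mono inter_subset_left) volume_P_lt_top).ne
  have hfinPD : volume (P \ A) ≠ ⊤ :=
    (lt_of_le_of_lt (measure_mono diff_subset) volume_P_lt_top).ne
  have hsplit : (∫ p in P ∩ A, f p) + (∫ p in P \ A, f p) = ∫ p in P, f p :=
    integral_inter_add_diff hA hfint
  set Q' : Set (ℝ × ℝ) := Ioo (-(1:ℝ)/2) (-(1:ℝ)/4) ×ˢ Ioo (-(1:ℝ)/2) (-(1:ℝ)/4) with hQ'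
  have hvolQ' : volume Q' = ENNReal.ofReal (1/16) := by
    rw [hQ', Measure.volume_eq_prod, Measure.prod_prod, Real.volume_Ioo,
      ← ENNReal.ofReal_mul (by norm_num)]
    norm_num
  have hQA : Q' ⊆ P ∩ A := by
    rintro ⟨x, y⟩ ⟨⟨hx1, hx2⟩, ⟨hy1, hy2⟩⟩
    refine ⟨⟨by linarith, by linarith, by linarith, by linarith, by linarith⟩, ?_⟩
    show x + y ≤ -(1:ℝ)/2
    linarith
  have hvol1 : (1:ℝ)/16 ≤ (volume (P ∩ A)).toReal := by
    have := ENNReal.toReal_mono hfinPA (measure_mono hQA)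
    rw [hvolQ'] at this
    simpa using this
  have hvol2 : (volume (P \ A)).toReal ≤ 4 := by
    have := ENNReal.toReal_mono volume_P_lt_top.ne (measure_mono (diff_subset (s := P) (t := A)))
    linarith [volume_P_toReal_le]
  -- upper bound on P ∩ A
  have h1 : (∫ p in P ∩ A, f p) ≤ (volume (P ∩ A)).toReal • (-(1:ℝ)/2 * Real.exp 24) := by
    rw [← measureReal_def, ← setIntegral_const]
    apply setIntegral_mono_on (hfint.mono_set inter_subset_left)
      (integrableOn_const hfinPA) hPA
    intro p hp
    have hs : p.1 + p.2 ≤ -(1:ℝ)/2 := hp.2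
    have he : Real.exp 24 ≤ Real.exp (-48 * (p.1 + p.2)) := by
      apply Real.exp_le_exp.2; linarith
    show (p.1 + p.2) * Real.exp (-48 * (p.1 + p.2)) ≤ -(1:ℝ)/2 * Real.exp 24
    calc (p.1 + p.2) * Real.exp (-48 * (p.1 + p.2))
        ≤ (p.1 + p.2) * Real.exp 24 := by
          apply mul_le_mul_of_nonpos_left he (by linarith)
      _ ≤ -(1:ℝ)/2 * Real.exp 24 :=
          mul_le_mul_of_nonneg_right hs (Real.exp_pos _).le
  have h1' : (∫ p in P ∩ A, f p) ≤ -(15625:ℝ)/32 := by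
    have hc : -(1:ℝ)/2 * Real.exp 24 ≤ 0 := by
      have := Real.exp_pos (24:ℝ); nlinarith
    have : (volume (P ∩ A)).toReal * (-(1:ℝ)/2 * Real.exp 24) ≤
        (1:ℝ)/16 * (-(1:ℝ)/2 * Real.exp 24) :=
      mul_le_mul_of_nonpos_right hvol1 hc
    have h24 := exp24_ge
    rw [smul_eq_mul] at h1
    nlinarith
  -- upper bound on P \ A
  have h2 : (∫ p in P \ A, f p) ≤ 4 := by
    have h2' : (∫ p in P \ A, f p) ≤ (volume (P \ A)).toReal • (1:ℝ) := by
      rw [← measureReal_def, ← setIntegral_const]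
      apply setIntegral_mono_on (hfint.mono_set diff_subset)
        (integrableOn_const hfinPD) (measurableSet_P.diff hA)
      intro p hp
      have hsu : p.1 + p.2 ≤ 1 := hp.1.2.2.2.2
      rcases le_or_gt (p.1 + p.2) 0 with hs | hs
      · have hep := Real.exp_pos (-48 * (p.1 + p.2))
        show (p.1 + p.2) * Real.exp (-48 * (p.1 + p.2)) ≤ 1
        nlinarith
      · have he : Real.exp (-48 * (p.1 + p.2)) ≤ 1 := by
          rw [Real.exp_le_one_iff]; linarith
        have hep := Real.exp_pos (-48 * (p.1 + p.2))
        show (p.1 + p.2) * Real.exp (-48 * (p.1 + p.2)) ≤ 1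
        nlinarith
    rw [smul_eq_mul] at h2'
    nlinarith [ENNReal.toReal_nonneg (a := volume (P \ A))]
  rw [hGe, ← hsplit]
  linarith

lemma exists_G_zero : ∃ c₀ : ℝ, G c₀ = 0 := by
  have h := intermediate_value_Icc' (by norm_num : (-48:ℝ) ≤ 48) continuous_G.continuousOn
  have h0 : (0:ℝ) ∈ Icc (G 48) (G (-48)) := ⟨G_48_neg.le, G_neg48_pos.le⟩
  obtain ⟨c₀, _, hc₀⟩ := h h0
  exact ⟨c₀, hc₀⟩

/-- `c` satisfies the vanishing-moment conditions iff `c` is the unique global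
minimizer of `F`. -/
theorem stmt_3 (c : ℝ) :
    ((∫ p in P, p.1 * Real.exp (-c * (p.1 + p.2))) = 0 ∧
        (∫ p in P, p.2 * Real.exp (-c * (p.1 + p.2))) = 0) ↔
      ((∀ c' : ℝ, F c ≤ F c') ∧ ∀ c' : ℝ, c' ≠ c → F c < F c') := by
  rw [moments_iff]
  constructor
  · intro hG
    exact ⟨fun c' => F_ge c c' hG, fun c' hne => F_gt c c' hG hne⟩
  · rintro ⟨hmin, hstrict⟩
    obtain ⟨c₀, hc₀⟩ := exists_G_zero
    by_cases hcc : c = c₀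
    · rw [hcc]; exact hc₀
    · exfalso
      have h1 : F c < F c₀ := hstrict c₀ (fun h => hcc h.symm)
      have h2 : F c₀ ≤ F c := F_ge c₀ c hc₀
      linarith
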